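/- Let (ũ_k)_{k≥0} be the Lehmer sequence associated to ζ and η. Then for every prime p not dividing 2c₂ and every integer k ≥ 1, ρ(p^k) = p^{max(k − κ(p), 0)}·ρ(p). -/

import Mathlib

open Finset Polynomial

/-- A complex algebraic integer that is rational is an integer. -/
lemma exists_int_of_rat_integral (r : ℂ) (hr : IsIntegral ℤ r) (q : ℚ) (hq : (q:ℂ) = r) :
    ∃ n : ℤ, (n:ℂ) = r := by
  have h1 : IsIntegral ℤ q := by
    have hinj : Function.Injective (algebraMap ℚ ℂ) := (algebraMap ℚ ℂ).injective
    rw [← isIntegral_algebraMap_iff hinj]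
    have : (algebraMap ℚ ℂ) q = r := hq
    rw [this]; exact hr
  obtain ⟨n, hn⟩ := IsIntegrallyClosed.isIntegral_iff.mp h1
  refine ⟨n, ?_⟩
  rw [← hq]
  have : (algebraMap ℤ ℚ) n = q := hn
  rw [← this]
  norm_num

/-- Transfer of divisibility from algebraic integers to `ℤ`. -/
lemma dvd_transfer (a b : ℤ) (r : ℂ) (hr : IsIntegral ℤ r) (h : (a:ℂ) = (b:ℂ) * r) : b ∣ a := by
  rcases eq_or_ne b 0 with hb | hb
  · subst hb
    simp only [Int.cast_zero, zero_mul] at h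
    have : a = 0 := by exact_mod_cast h
    simp [this]
  · have hb' : (b:ℂ) ≠ 0 := Int.cast_ne_zero.mpr hb
    have hq : ((a / b : ℚ) : ℂ) = r := by
      push_cast
      rw [div_eq_iff hb', h, mul_comm]
    obtain ⟨n, hn⟩ := exists_int_of_rat_integral r hr _ hq
    refine ⟨n, ?_⟩
    have : (a:ℂ) = (b:ℂ) * (n:ℂ) := by rw [hn]; exact h
    exact_mod_cast this

lemma zeta_integral (ζ η : ℂ) (c₁ c₂ : ℤ)
    (hc₁ : (c₁ : ℂ) = (ζ + η) ^ 2) (hc₂ : (c₂ : ℂ) = ζ * η) : IsIntegral ℤ ζ := by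
  refine ⟨X ^ 4 + (C (-(c₁ - 2*c₂)) * X ^ 2 + C (c₂ ^ 2)), ?_, ?_⟩
  · apply monic_X_pow_add
    have h2 : (C (-(c₁ - 2*c₂)) * X ^ 2 : ℤ[X]).degree ≤ 2 := by
      apply le_trans (degree_mul_le _ _)
      have hC := degree_C_le (a := -(c₁ - 2*c₂)) (R := ℤ)
      have hx : (X ^ 2 : ℤ[X]).degree ≤ 2 := degree_X_pow_le 2
      calc (C (-(c₁ - 2*c₂)) : ℤ[X]).degree + (X ^ 2 : ℤ[X]).degree
          ≤ 0 + 2 := add_le_add hC hx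
        _ = 2 := by norm_num
    have h3 : (C (c₂ ^ 2) : ℤ[X]).degree ≤ 2 := le_trans degree_C_le (by norm_num)
    have h1 : (C (-(c₁ - 2*c₂)) * X ^ 2 + C (c₂ ^ 2)).degree ≤ 2 :=
      le_trans (degree_add_le _ _) (max_le h2 h3)
    exact lt_of_le_of_lt h1 (by norm_num)
  · simp only [eval₂_add, eval₂_mul, eval₂_pow, eval₂_X, eval₂_C]
    have e1 : ((-(c₁ - 2*c₂) : ℤ) : ℂ) = -(ζ^2 + η^2) := by push_cast [hc₁, hc₂]; ring
    have e2 : ((c₂^2 : ℤ) : ℂ) = ζ^2 * η^2 := by push_cast [hc₂]; ring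
    show ζ^4 + (((-(c₁ - 2*c₂) : ℤ) : ℂ) * ζ^2 + ((c₂^2 : ℤ) : ℂ)) = 0
    rw [e1, e2]; ring

noncomputable def Efun (x y : ℂ) (n : ℕ) : ℂ :=
  ∑ i ∈ range n, (∑ j ∈ range i, x^j * y^(i-1-j)) * y^(n-1-i)

lemma Efun_integral (x y : ℂ) (hx : IsIntegral ℤ x) (hy : IsIntegral ℤ y) (n : ℕ) :
    IsIntegral ℤ (Efun x y n) := by
  apply IsIntegral.sum
  intro i _
  exact ((IsIntegral.sum _ (fun j _ => (hx.pow j).mul (hy.pow _))).mul (hy.pow _))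

lemma lin_eq (x y : ℂ) (n : ℕ) :
    ∑ i ∈ range n, x^i * y^(n-1-i) = n * y^(n-1) + (x - y) * Efun x y n := by
  have key : ∀ i ∈ range n, x^i * y^(n-1-i)
      = y^(n-1) + (x - y) * ((∑ j ∈ range i, x^j * y^(i-1-j)) * y^(n-1-i)) := by
    intro i hi
    have hgeom : (x - y) * ∑ j ∈ range i, x^j * y^(i-1-j) = x^i - y^i := by
      rw [mul_comm]; exact geom_sum₂_mul x y i
    have hyy : y^i * y^(n-1-i) = y^(n-1) := by
      rw [← pow_add]; congr 1; have := mem_range.mp hi; omega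
    calc x^i * y^(n-1-i) = y^i * y^(n-1-i) + (x^i - y^i) * y^(n-1-i) := by ring
      _ = y^(n-1) + (x - y) * ((∑ j ∈ range i, x^j * y^(i-1-j)) * y^(n-1-i)) := by
          rw [hyy, ← hgeom]; ring
  rw [Finset.sum_congr rfl key, Finset.sum_add_distrib, Finset.sum_const, card_range,
    ← Finset.mul_sum, Efun, nsmul_eq_mul]

lemma quad_eq (x y : ℂ) (hx : IsIntegral ℤ x) (hy : IsIntegral ℤ y) (n : ℕ) :
    ∃ F : ℂ, IsIntegral ℤ F ∧
      ∑ i ∈ range n, x^i * y^(n-1-i)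
        = n * y^(n-1) + (x - y) * ((n*(n-1)/2 : ℕ) * y^(n-2)) + (x - y)^2 * F := by
  refine ⟨∑ i ∈ range n, Efun x y i * y^(n-1-i),
    IsIntegral.sum _ (fun i _ => (Efun_integral x y hx hy i).mul (hy.pow _)), ?_⟩
  rw [lin_eq]
  have hE : Efun x y n = (↑(n*(n-1)/2) : ℂ) * y^(n-2)
      + (x - y) * ∑ i ∈ range n, Efun x y i * y^(n-1-i) := by
    unfold Efun
    have key : ∀ i ∈ range n, (∑ j ∈ range i, x^j * y^(i-1-j)) * y^(n-1-i)
        = (i : ℂ) * y^(n-2) + (x - y) * (Efun x y i * y^(n-1-i)) := by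
      intro i hi
      rw [lin_eq]
      rcases Nat.eq_zero_or_pos i with h0 | h1
      · subst h0; simp [mul_assoc]
      · have h2 : (i:ℂ) * y^(i-1) * y^(n-1-i) = (i:ℂ) * y^(n-2) := by
          rw [mul_assoc, ← pow_add]
          congr 2
          have := mem_range.mp hi; omega
        rw [add_mul, h2]; ring
    rw [Finset.sum_congr rfl key, Finset.sum_add_distrib, ← Finset.mul_sum, ← Finset.sum_mul]
    congr 1
    rw [← Nat.cast_sum, Finset.sum_range_id]
  rw [hE]; ring

lemma intC_integral (n : ℤ) : IsIntegral ℤ ((n:ℂ)) := isIntegral_algebraMap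

lemma natC_integral (n : ℕ) : IsIntegral ℤ ((n:ℂ)) := by
  have h : ((n:ℕ):ℂ) = (((n:ℤ)):ℂ) := by push_cast; rfl
  rw [h]; exact intC_integral n

/-- For every prime `p` not dividing `2c₂` and every integer `k ≥ 1`,
`ρ(p^k) = p^(max(k − κ(p), 0)) · ρ(p)`, where `κ(p) = ν_p(ũ_{ρ(p)})`. -/
theorem stmt_5
    (ζ η : ℂ) (c₁ c₂ : ℤ)
    (hc₁ : (c₁ : ℂ) = (ζ + η) ^ 2) (hc₂ : (c₂ : ℂ) = ζ * η)
    (hc₁0 : c₁ ≠ 0) (hc₂0 : c₂ ≠ 0) (hcop : IsCoprime c₁ c₂)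
    (habs : ‖η‖ ≤ ‖ζ‖)
    (hru : ∀ k : ℕ, 0 < k → (ζ / η) ^ k ≠ 1)
    (u : ℕ → ℤ)
    (hu : ∀ k : ℕ, (u k : ℂ) =
      if Odd k then (ζ ^ k - η ^ k) / (ζ - η) else (ζ ^ k - η ^ k) / (ζ ^ 2 - η ^ 2))
    (ρ : ℕ → ℕ)
    (hρ : ∀ m : ℕ, 0 < m → Int.gcd (m : ℤ) c₂ = 1 →
      0 < ρ m ∧ (m : ℤ) ∣ u (ρ m) ∧ ∀ k : ℕ, 0 < k → (m : ℤ) ∣ u k → ρ m ≤ k) :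
    ∀ p : ℕ, p.Prime → ¬ ((p : ℤ) ∣ 2 * c₂) → ∀ k : ℕ, 1 ≤ k →
      ρ (p ^ k) = p ^ (k - padicValInt p (u (ρ p))) * ρ p := by
  intro p hp hpd k hk
  haveI factp : Fact p.Prime := ⟨hp⟩
  -- basic facts
  have hη0 : η ≠ 0 := by
    intro h; apply hc₂0; exact_mod_cast (by rw [hc₂, h, mul_zero] : (c₂:ℂ) = 0)
  have hζ0 : ζ ≠ 0 := by
    intro h; apply hc₂0; exact_mod_cast (by rw [hc₂, h, zero_mul] : (c₂:ℂ) = 0)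
  have hwne : ∀ n : ℕ, 0 < n → ζ^n - η^n ≠ 0 := by
    intro n hn h
    apply hru n hn
    rw [div_pow, div_eq_one_iff_eq (pow_ne_zero n hη0)]
    exact sub_eq_zero.mp h
  have hsub : ζ - η ≠ 0 := by simpa using hwne 1 one_pos
  have hD2 : ζ^2 - η^2 ≠ 0 := hwne 2 two_pos
  have hadd : ζ + η ≠ 0 := by
    intro h
    apply hD2
    have : ζ^2 - η^2 = (ζ+η)*(ζ-η) := by ring
    rw [this, h, zero_mul]
  have hδ : ∀ n : ℕ, (if Odd n then ζ - η else ζ^2 - η^2) ≠ 0 := by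
    intro n; split <;> assumption
  have huw : ∀ n : ℕ, (u n : ℂ) * (if Odd n then ζ - η else ζ^2 - η^2) = ζ^n - η^n := by
    intro n
    rw [hu n]
    split <;> rw [div_mul_cancel₀]
    · exact hsub
    · exact hD2
  have hune : ∀ n : ℕ, 0 < n → u n ≠ 0 := by
    intro n hn h
    apply hwne n hn
    rw [← huw n, h]; simp
  have hζint : IsIntegral ℤ ζ := zeta_integral ζ η c₁ c₂ hc₁ hc₂
  have hηint : IsIntegral ℤ η := zeta_integral η ζ c₁ c₂ (by rw [hc₁]; ring) (by rw [hc₂]; ring)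
  have hδint : ∀ n : ℕ, IsIntegral ℤ (if Odd n then ζ - η else ζ^2 - η^2) := by
    intro n; split
    · exact hζint.sub hηint
    · exact (hζint.pow 2).sub (hηint.pow 2)
  have hp2 : p ≠ 2 := by
    intro h
    exact hpd (h ▸ Dvd.intro c₂ rfl)
  have hpc2 : ¬ (p:ℤ) ∣ c₂ := fun h => hpd (h.mul_left 2)
  have hpZ : Prime (p:ℤ) := Int.prime_iff_natAbs_prime.mpr (by simpa using hp)
  have hpodd : Odd p := hp.odd_of_ne_two hp2
  have hpnot2 : ¬ (p:ℤ) ∣ 2 := by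
    intro h
    have : (p:ℤ) ∣ 2 * c₂ := h.mul_right c₂
    exact hpd this
  -- Lemma O : if p ∣ c₁ then p divides no odd-indexed u n
  have hO : ∀ n : ℕ, Odd n → (p:ℤ) ∣ u n → ¬ (p:ℤ) ∣ c₁ := by
    intro n hn hdvd hpc1
    set A : ℂ := ∑ i ∈ range n, ζ^i * (-η)^(n-1-i) with hA_def
    have hAint : IsIntegral ℤ (A^2) := by
      apply IsIntegral.pow
      exact IsIntegral.sum _ (fun i _ => (hζint.pow i).mul (hηint.neg.pow _))
    have hA : (ζ + η) * A = ζ^n + η^n := by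
      have := geom_sum₂_mul ζ (-η) n
      rw [← hA_def] at this
      have h2 : ζ - -η = ζ + η := by ring
      rw [h2] at this
      rw [mul_comm, this, hn.neg_pow]
      ring
    have hun : (u n : ℂ) * (ζ - η) = ζ^n - η^n := by
      have := huw n; rw [if_pos hn] at this; exact this
    have key : ((4*c₂^n + (u n)^2*(c₁ - 4*c₂) : ℤ) : ℂ) = (c₁:ℂ) * (A^2) := by
      push_cast
      rw [hc₁, hc₂]
      linear_combination ((u n:ℂ)*(ζ-η) + (ζ^n-η^n))*hun - ((ζ+η)*A + (ζ^n+η^n))*hA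
    have hdvd1 : c₁ ∣ 4*c₂^n + (u n)^2*(c₁ - 4*c₂) := dvd_transfer _ _ _ hAint key
    have hdvd2 : (p:ℤ) ∣ 4*c₂^n := by
      have h1 : (p:ℤ) ∣ 4*c₂^n + (u n)^2*(c₁ - 4*c₂) := hpc1.trans hdvd1
      have h2 : (p:ℤ) ∣ (u n)^2*(c₁ - 4*c₂) := (hdvd.pow two_ne_zero).mul_right _
      simpa using dvd_sub h1 h2
    rcases hpZ.dvd_mul.mp hdvd2 with h | h
    · have : (p:ℤ) ∣ 2 := by
        have := hpZ.dvd_mul.mp (show (p:ℤ) ∣ 2*2 by norm_num at h ⊢; exact h)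
        tauto
      exact hpnot2 this
    · exact hpc2 (hpZ.dvd_of_dvd_pow h)
  -- Subtraction lemma
  have hSub : ∀ n a : ℕ, 0 < n → 0 < a → (p:ℤ) ∣ u (n+a) → (p:ℤ) ∣ u n → (p:ℤ) ∣ u a := by
    intro n a hn0 ha0 hm hn
    obtain ⟨s, hs⟩ := hm
    obtain ⟨s', hs'⟩ := hn
    have hsC : (u (n+a) : ℂ) = (p:ℂ) * (s:ℂ) := by exact_mod_cast congrArg (Int.cast : ℤ → ℂ) hs
    have hs'C : (u n : ℂ) = (p:ℂ) * (s':ℂ) := by exact_mod_cast congrArg (Int.cast : ℤ → ℂ) hs'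
    rcases Nat.even_or_odd n with hne | hno
    · rcases Nat.even_or_odd a with hae | hao
      · -- n even, a even
        have key : ((c₂^n * u a : ℤ):ℂ) = ζ^n * (u (n+a):ℂ) - ζ^(n+a) * (u n:ℂ) := by
          push_cast
          rw [hc₂, hu (n+a), hu n, hu a,
            if_neg (Nat.not_odd_iff_even.mpr (hne.add hae)),
            if_neg (Nat.not_odd_iff_even.mpr hne), if_neg (Nat.not_odd_iff_even.mpr hae)]
          field_simp
          ring
        have hdv : (p:ℤ) ∣ c₂^n * u a := by
          apply dvd_transfer _ _ (ζ^n * (s:ℂ) - ζ^(n+a) * (s':ℂ))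
          · exact ((hζint.pow n).mul (intC_integral s)).sub
              ((hζint.pow (n+a)).mul (intC_integral s'))
          · rw [key, hsC, hs'C]; push_cast; ring
        rcases hpZ.dvd_mul.mp hdv with h | h
        · exact absurd (hpZ.dvd_of_dvd_pow h) hpc2
        · exact h
      · -- n even, a odd
        have key : ((c₂^n * u a : ℤ):ℂ) = ζ^n * (u (n+a):ℂ) - ζ^(n+a) * (ζ+η) * (u n:ℂ) := by
          push_cast
          rw [hc₂, hu (n+a), hu n, hu a,
            if_pos (hne.add_odd hao),
            if_neg (Nat.not_odd_iff_even.mpr hne), if_pos hao]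
          field_simp
          ring
        have hdv : (p:ℤ) ∣ c₂^n * u a := by
          apply dvd_transfer _ _ (ζ^n * (s:ℂ) - ζ^(n+a) * (ζ+η) * (s':ℂ))
          · exact ((hζint.pow n).mul (intC_integral s)).sub
              (((hζint.pow (n+a)).mul (hζint.add hηint)).mul (intC_integral s'))
          · rw [key, hsC, hs'C]; push_cast; ring
        rcases hpZ.dvd_mul.mp hdv with h | h
        · exact absurd (hpZ.dvd_of_dvd_pow h) hpc2
        · exact h
    · rcases Nat.even_or_odd a with hae | hao
      · -- n odd, a even
        have key : ((c₂^n * u a * c₁ : ℤ):ℂ)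
            = ζ^n * (ζ+η) * (u (n+a):ℂ) - ζ^(n+a) * (ζ+η) * (u n:ℂ) := by
          push_cast
          rw [hc₂, hc₁, hu (n+a), hu n, hu a,
            if_pos (hno.add_even hae),
            if_pos hno, if_neg (Nat.not_odd_iff_even.mpr hae)]
          field_simp
          ring
        have hdv : (p:ℤ) ∣ c₂^n * u a * c₁ := by
          apply dvd_transfer _ _ ((ζ^n * (ζ+η)) * (s:ℂ) - (ζ^(n+a) * (ζ+η)) * (s':ℂ))
          · exact (((hζint.pow n).mul (hζint.add hηint)).mul (intC_integral s)).sub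
              (((hζint.pow (n+a)).mul (hζint.add hηint)).mul (intC_integral s'))
          · rw [key, hsC, hs'C]; push_cast; ring
        rcases hpZ.dvd_mul.mp hdv with h | h
        · rcases hpZ.dvd_mul.mp h with h2 | h2
          · exact absurd (hpZ.dvd_of_dvd_pow h2) hpc2
          · exact h2
        · exact absurd h (hO n hno ⟨s', hs'⟩)
      · -- n odd, a odd
        have key : ((c₂^n * u a : ℤ):ℂ) = ζ^n * (ζ+η) * (u (n+a):ℂ) - ζ^(n+a) * (u n:ℂ) := by
          push_cast
          rw [hc₂, hu (n+a), hu n, hu a,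
            if_neg (Nat.not_odd_iff_even.mpr (hno.add_odd hao)),
            if_pos hno, if_pos hao]
          field_simp
          ring
        have hdv : (p:ℤ) ∣ c₂^n * u a := by
          apply dvd_transfer _ _ ((ζ^n * (ζ+η)) * (s:ℂ) - ζ^(n+a) * (s':ℂ))
          · exact (((hζint.pow n).mul (hζint.add hηint)).mul (intC_integral s)).sub
              ((hζint.pow (n+a)).mul (intC_integral s'))
          · rw [key, hsC, hs'C]; push_cast; ring
        rcases hpZ.dvd_mul.mp hdv with h | h
        · exact absurd (hpZ.dvd_of_dvd_pow h) hpc2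
        · exact h
  -- rank of apparition at p
  have hgcdp : Int.gcd (p:ℤ) c₂ = 1 :=
    Int.isCoprime_iff_gcd_eq_one.mp (hpZ.coprime_iff_not_dvd.mpr hpc2)
  obtain ⟨hr0, hrd, hrmin⟩ := hρ p hp.pos hgcdp
  have hRank : ∀ n : ℕ, 0 < n → (p:ℤ) ∣ u n → ρ p ∣ n := by
    intro n
    induction n using Nat.strong_induction_on with
    | _ n IH =>
      intro hn hd
      rcases lt_trichotomy n (ρ p) with h | h | h
      · exact absurd (hrmin n hn hd) (by omega)
      · simp [h]
      · have ha0 : 0 < n - ρ p := by omega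
        have heq : ρ p + (n - ρ p) = n := by omega
        have hd2 : (p:ℤ) ∣ u (n - ρ p) :=
          hSub (ρ p) (n - ρ p) hr0 ha0 (by rw [heq]; exact hd) hrd
        obtain ⟨q, hq⟩ := IH (n - ρ p) (by omega) ha0 hd2
        refine ⟨q + 1, ?_⟩
        rw [Nat.mul_add, mul_one, ← hq]
        omega
  -- the squares of the "denominators"
  have hc14 : ((c₁ - 4*c₂ : ℤ):ℂ) = (ζ-η)^2 := by push_cast; rw [hc₁, hc₂]; ring
  have hc14' : (((c₁ - 4*c₂)*c₁ : ℤ):ℂ) = (ζ^2-η^2)^2 := by push_cast; rw [hc₁, hc₂]; ring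
  have hwΔ : ∀ n : ℕ, ((u n : ℤ):ℂ)^2 * (((if Odd n then c₁ - 4*c₂ else (c₁-4*c₂)*c₁ : ℤ)):ℂ)
      = (ζ^n - η^n)^2 := by
    intro n
    have h := huw n
    by_cases hn : Odd n
    · rw [if_pos hn] at h ⊢
      rw [hc14]
      linear_combination ((u n:ℂ)*(ζ-η) + (ζ^n-η^n))*h
    · rw [if_neg hn] at h ⊢
      rw [hc14']
      linear_combination ((u n:ℂ)*(ζ^2-η^2) + (ζ^n-η^n))*h
  have h14ne : (c₁ - 4*c₂ : ℤ) ≠ 0 := by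
    intro h
    apply hsub
    have h2 : ((c₁ - 4*c₂ : ℤ):ℂ) = 0 := by rw [h]; simp
    rw [hc14] at h2
    exact pow_eq_zero_iff two_ne_zero |>.mp h2
  have hΔne : ∀ n : ℕ, (if Odd n then c₁ - 4*c₂ else (c₁-4*c₂)*c₁) ≠ 0 := by
    intro n
    split
    · exact h14ne
    · exact mul_ne_zero h14ne hc₁0
  -- existence of the integer `c = T²` together with the main identity
  have hTc : ∀ m t : ℕ, 0 < m → 0 < t →
      ∃ c : ℤ, ((c:ℂ) = (∑ i ∈ range t, (ζ^m)^i * (η^m)^(t-1-i))^2) ∧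
        (u (m*t))^2 * (if Odd (m*t) then c₁ - 4*c₂ else (c₁-4*c₂)*c₁)
          = (u m)^2 * (if Odd m then c₁ - 4*c₂ else (c₁-4*c₂)*c₁) * c := by
    intro m t hm0 ht0
    set T : ℂ := ∑ i ∈ range t, (ζ^m)^i * (η^m)^(t-1-i) with hT_def
    have hTint : IsIntegral ℤ T :=
      IsIntegral.sum _ (fun i _ => ((hζint.pow m).pow i).mul ((hηint.pow m).pow _))
    have hT1 : (ζ^m - η^m) * T = ζ^(m*t) - η^(m*t) := by
      rw [mul_comm, hT_def]
      have := geom_sum₂_mul (ζ^m) (η^m) t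
      rw [← pow_mul, ← pow_mul] at this
      exact this
    set a : ℤ := (u (m*t))^2 * (if Odd (m*t) then c₁ - 4*c₂ else (c₁-4*c₂)*c₁) with ha_def
    set b : ℤ := (u m)^2 * (if Odd m then c₁ - 4*c₂ else (c₁-4*c₂)*c₁) with hb_def
    have hbne : b ≠ 0 := mul_ne_zero (pow_ne_zero 2 (hune m hm0)) (hΔne m)
    have hbC : (b:ℂ) ≠ 0 := Int.cast_ne_zero.mpr hbne
    have hsq : T^2 * (b:ℂ) = (a:ℂ) := by
      have h2 := congrArg (·^2) hT1
      rw [mul_pow] at h2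
      rw [hb_def, ha_def]
      push_cast
      rw [← hwΔ m, ← hwΔ (m*t)] at h2
      push_cast at h2
      linear_combination h2
    obtain ⟨c, hcC⟩ := exists_int_of_rat_integral (T^2) (hTint.pow 2) ((a:ℚ)/(b:ℚ)) (by
      push_cast
      rw [div_eq_iff hbC]
      exact hsq.symm)
    refine ⟨c, hcC, ?_⟩
    have : (a:ℂ) = ((b * c : ℤ):ℂ) := by push_cast; rw [hcC, ← hsq]; ring
    exact_mod_cast this
  -- p does not divide c when p does not divide t
  have hTkey1 : ∀ m t : ℕ, 0 < m → 0 < t → (p:ℤ) ∣ u m → ¬ p ∣ t →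
      ∃ c : ℤ, ¬ (p:ℤ) ∣ c ∧
        (u (m*t))^2 * (if Odd (m*t) then c₁ - 4*c₂ else (c₁-4*c₂)*c₁)
          = (u m)^2 * (if Odd m then c₁ - 4*c₂ else (c₁-4*c₂)*c₁) * c := by
    intro m t hm0 ht0 hdvd hpt
    obtain ⟨c, hcC, hid⟩ := hTc m t hm0 ht0
    refine ⟨c, ?_, hid⟩
    intro hpc
    obtain ⟨c'', rfl⟩ := hpc
    obtain ⟨s, hs⟩ := hdvd
    have hsC : (u m : ℂ) = (p:ℂ) * (s:ℂ) := by exact_mod_cast congrArg (Int.cast : ℤ → ℂ) hs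
    set dm : ℂ := if Odd m then ζ - η else ζ^2 - η^2 with hdm_def
    have hdmint : IsIntegral ℤ dm := hδint m
    have hpw : ζ^m - η^m = (p:ℂ) * ((s:ℂ) * dm) := by
      rw [← huw m, ← hdm_def, hsC]; ring
    set E : ℂ := Efun (ζ^m) (η^m) t with hE_def
    have hEint : IsIntegral ℤ E := Efun_integral _ _ (hζint.pow m) (hηint.pow m) t
    have hTlin : (∑ i ∈ range t, (ζ^m)^i * (η^m)^(t-1-i))
        = (t:ℂ) * (η^m)^(t-1) + (ζ^m - η^m) * E := lin_eq (ζ^m) (η^m) t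
    have hKint : IsIntegral ℤ (((s:ℂ) * dm * E)
        * (2*(t:ℂ)*(η^m)^(t-1) + (p:ℂ)*((s:ℂ)*dm)*E)) := by
      apply IsIntegral.mul
      · exact ((intC_integral s).mul hdmint).mul hEint
      · apply IsIntegral.add
        · exact ((natC_integral 2).mul (natC_integral t)).mul ((hηint.pow m).pow (t-1))
        · exact ((natC_integral p).mul ((intC_integral s).mul hdmint)).mul hEint
    have hcC' : (p:ℂ) * (c'':ℂ) = (∑ i ∈ range t, (ζ^m)^i * (η^m)^(t-1-i))^2 := by
      have h := hcC; push_cast at h; exact h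
    have hT2 : (p:ℂ) * (c'':ℂ) = (t:ℂ)^2 * ((η^m)^(t-1))^2
        + (p:ℂ) * (((s:ℂ) * dm * E) * (2*(t:ℂ)*(η^m)^(t-1) + (p:ℂ)*((s:ℂ)*dm)*E)) := by
      rw [hcC', hTlin, hpw]
      ring
    have hkey : (((t:ℤ)^2 * c₂^(m*(2*(t-1))) : ℤ):ℂ)
        = (p:ℂ) * ((c'':ℂ) * (ζ^m)^(2*(t-1))
          - (((s:ℂ) * dm * E) * (2*(t:ℂ)*(η^m)^(t-1) + (p:ℂ)*((s:ℂ)*dm)*E)) * (ζ^m)^(2*(t-1))) := by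
      push_cast
      rw [hc₂]
      linear_combination (-((ζ^m)^(2*(t-1)))) * hT2
    have hdvd2 : (p:ℤ) ∣ (t:ℤ)^2 * c₂^(m*(2*(t-1))) :=
      dvd_transfer _ _ _ (((intC_integral c'').mul ((hζint.pow m).pow _)).sub
        (hKint.mul ((hζint.pow m).pow _))) hkey
    rcases hpZ.dvd_mul.mp hdvd2 with h | h
    · exact hpt (Int.natCast_dvd_natCast.mp (hpZ.dvd_of_dvd_pow h))
    · exact hpc2 (hpZ.dvd_of_dvd_pow h)
  -- the `t = p` case : the cofactor is exactly divisible by p²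
  have hTkeyp : ∀ m : ℕ, 0 < m → (p:ℤ) ∣ u m →
      ∃ c' : ℤ, ¬ (p:ℤ) ∣ c' ∧
        (u (m*p))^2 * (if Odd (m*p) then c₁ - 4*c₂ else (c₁-4*c₂)*c₁)
          = (u m)^2 * (if Odd m then c₁ - 4*c₂ else (c₁-4*c₂)*c₁) * ((p:ℤ)^2 * c') := by
    intro m hm0 hdvd
    obtain ⟨c, hcC, hid⟩ := hTc m p hm0 hp.pos
    obtain ⟨s, hs⟩ := hdvd
    have hsC : (u m : ℂ) = (p:ℂ) * (s:ℂ) := by exact_mod_cast congrArg (Int.cast : ℤ → ℂ) hs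
    set dm : ℂ := if Odd m then ζ - η else ζ^2 - η^2 with hdm_def
    have hdmint : IsIntegral ℤ dm := hδint m
    have hpw : ζ^m - η^m = (p:ℂ) * ((s:ℂ) * dm) := by
      rw [← huw m, ← hdm_def, hsC]; ring
    obtain ⟨G, hGint, hTeq⟩ : ∃ G : ℂ, IsIntegral ℤ G ∧
        (∑ i ∈ range p, (ζ^m)^i * (η^m)^(p-1-i))
          = (p:ℂ) * ((η^m)^(p-1) + (p:ℂ) * G) := by
      obtain ⟨F, hFint, hTq⟩ := quad_eq (ζ^m) (η^m) (hζint.pow m) (hηint.pow m) p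
      have hhalf : (p*(p-1)/2 : ℕ) = p * ((p-1)/2) := by
        obtain ⟨j, hj⟩ := hpodd
        have h1 : p - 1 = 2*j := by omega
        rw [h1, show p*(2*j) = 2*(p*j) from by ring,
          Nat.mul_div_cancel_left _ (by norm_num : 0 < 2),
          Nat.mul_div_cancel_left _ (by norm_num : 0 < 2)]
      refine ⟨(s:ℂ)*dm*(((p-1)/2 : ℕ):ℂ)*(η^m)^(p-2) + (s:ℂ)^2*dm^2*F, ?_, ?_⟩
      · exact ((((intC_integral s).mul hdmint).mul (natC_integral _)).mul
          ((hηint.pow m).pow _)).add ((((intC_integral s).pow 2).mul (hdmint.pow 2)).mul hFint)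
      · rw [hTq, hpw, hhalf]
        push_cast
        ring
    have hpC : ((p:ℂ)) ≠ 0 := Nat.cast_ne_zero.mpr hp.ne_zero
    have hc2 : (p:ℤ)^2 ∣ c := by
      apply dvd_transfer c ((p:ℤ)^2) (((η^m)^(p-1) + (p:ℂ) * G)^2)
      · exact (((hηint.pow m).pow _).add ((natC_integral p).mul hGint)).pow 2
      · rw [hcC, hTeq]; push_cast; ring
    obtain ⟨c', rfl⟩ := hc2
    refine ⟨c', ?_, hid⟩
    intro hpc'
    obtain ⟨d, rfl⟩ := hpc'
    have hcC2 : ((p:ℂ))^2 * ((p:ℂ)*(d:ℂ)) = ((p:ℂ))^2 * (((η^m)^(p-1) + (p:ℂ)*G)^2) := by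
      have h := hcC
      rw [hTeq] at h
      push_cast at h
      linear_combination h
    have hpd2 : (p:ℂ)*(d:ℂ) = ((η^m)^(p-1))^2
        + (p:ℂ) * (G * (2*(η^m)^(p-1) + (p:ℂ)*G)) := by
      have h := mul_left_cancel₀ (pow_ne_zero 2 hpC) hcC2
      rw [h]; ring
    have hkey : ((c₂^(m*(2*(p-1))) : ℤ):ℂ)
        = (p:ℂ) * ((d:ℂ) * (ζ^m)^(2*(p-1))
          - (G * (2*(η^m)^(p-1) + (p:ℂ)*G)) * (ζ^m)^(2*(p-1))) := by
      push_cast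
      rw [hc₂]
      linear_combination (-((ζ^m)^(2*(p-1)))) * hpd2
    have hdvd2 : (p:ℤ) ∣ c₂^(m*(2*(p-1))) :=
      dvd_transfer _ _ _ (((intC_integral d).mul ((hζint.pow m).pow _)).sub
        ((hGint.mul (((natC_integral 2).mul ((hηint.pow m).pow _)).add
          ((natC_integral p).mul hGint))).mul ((hζint.pow m).pow _))) hkey
    exact hpc2 (hpZ.dvd_of_dvd_pow hdvd2)
  -- valuation helpers
  have hv2 : ∀ z : ℤ, z ≠ 0 → padicValInt p (z^2) = 2*padicValInt p z := by
    intro z hz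
    rw [sq, padicValInt.mul hz hz, two_mul]
  have hdvdval : ∀ n j : ℕ, 0 < n → ((p:ℤ)^j ∣ u n ↔ j ≤ padicValInt p (u n)) := by
    intro n j hn
    rw [padicValInt_dvd_iff]
    have := hune n hn
    tauto
  -- LTE, step with p ∤ t
  have hLTE1 : ∀ m t : ℕ, 0 < m → 0 < t → ¬ p ∣ t → (p:ℤ) ∣ u m →
      padicValInt p (u (m*t)) = padicValInt p (u m) := by
    intro m t hm ht hpt hd
    obtain ⟨c, hpc, hid⟩ := hTkey1 m t hm ht hd hpt
    have humt := hune (m*t) (Nat.mul_pos hm ht)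
    have hum := hune m hm
    have hc0 : c ≠ 0 := by
      intro h0
      rw [h0, mul_zero] at hid
      exact (mul_ne_zero (pow_ne_zero 2 humt) (hΔne (m*t))) hid
    have hvc : padicValInt p c = 0 := padicValInt.eq_zero_of_not_dvd hpc
    by_cases hsp : Odd m ∧ ¬ Odd t
    · have hmt_odd : ¬ Odd (m*t) := by rw [Nat.odd_mul]; tauto
      rw [if_neg hmt_odd, if_pos hsp.1] at hid
      have hpc1 : ¬ (p:ℤ) ∣ c₁ := hO m hsp.1 hd
      have hvc1 : padicValInt p c₁ = 0 := padicValInt.eq_zero_of_not_dvd hpc1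
      have hval := congrArg (padicValInt p) hid
      rw [padicValInt.mul (pow_ne_zero 2 humt) (mul_ne_zero h14ne hc₁0),
        padicValInt.mul h14ne hc₁0,
        padicValInt.mul (mul_ne_zero (pow_ne_zero 2 hum) h14ne) hc0,
        padicValInt.mul (pow_ne_zero 2 hum) h14ne,
        hv2 _ humt, hv2 _ hum, hvc, hvc1] at hval
      omega
    · have hiff : Odd (m*t) ↔ Odd m := by
        rw [Nat.odd_mul]
        rcases Nat.even_or_odd t with h | h
        · constructor
          · tauto
          · intro hm'; exact absurd ⟨hm', Nat.not_odd_iff_even.mpr h⟩ hsp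
        · tauto
      rw [if_congr hiff rfl rfl] at hid
      have hdne := hΔne m
      have hval := congrArg (padicValInt p) hid
      rw [padicValInt.mul (pow_ne_zero 2 humt) hdne,
        padicValInt.mul (mul_ne_zero (pow_ne_zero 2 hum) hdne) hc0,
        padicValInt.mul (pow_ne_zero 2 hum) hdne,
        hv2 _ humt, hv2 _ hum, hvc] at hval
      omega
  -- LTE, step with t = p
  have hLTEp : ∀ m : ℕ, 0 < m → (p:ℤ) ∣ u m →
      padicValInt p (u (m*p)) = padicValInt p (u m) + 1 := by
    intro m hm hd
    obtain ⟨c', hpc', hid⟩ := hTkeyp m hm hd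
    have humt := hune (m*p) (Nat.mul_pos hm hp.pos)
    have hum := hune m hm
    have hc'0 : c' ≠ 0 := by
      intro h0
      rw [h0, mul_zero, mul_zero] at hid
      exact (mul_ne_zero (pow_ne_zero 2 humt) (hΔne (m*p))) hid
    have hvc' : padicValInt p c' = 0 := padicValInt.eq_zero_of_not_dvd hpc'
    have hiff : Odd (m*p) ↔ Odd m := by
      rw [Nat.odd_mul]
      tauto
    rw [if_congr hiff rfl rfl] at hid
    have hdne := hΔne m
    have hp0 : (p:ℤ) ≠ 0 := Int.natCast_ne_zero.mpr hp.ne_zero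
    have hvp2 : padicValInt p ((p:ℤ)^2) = 2 := by
      simp [padicValInt, Int.natAbs_pow, padicValNat.prime_pow]
    have hval := congrArg (padicValInt p) hid
    rw [padicValInt.mul (pow_ne_zero 2 humt) hdne,
      padicValInt.mul (mul_ne_zero (pow_ne_zero 2 hum) hdne)
        (mul_ne_zero (pow_ne_zero 2 hp0) hc'0),
      padicValInt.mul (pow_ne_zero 2 hum) hdne,
      padicValInt.mul (pow_ne_zero 2 hp0) hc'0,
      hv2 _ humt, hv2 _ hum, hvc', hvp2] at hval
    omega
  -- full LTE
  have hLTEfull : ∀ t : ℕ, 0 < t → ∀ m : ℕ, 0 < m → (p:ℤ) ∣ u m →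
      padicValInt p (u (m*t)) = padicValInt p (u m) + padicValNat p t := by
    intro t
    induction t using Nat.strong_induction_on with
    | _ t IH =>
      intro ht m hm hd
      by_cases hpt : p ∣ t
      · obtain ⟨t', rfl⟩ := hpt
        have ht' : 0 < t' := Nat.pos_of_ne_zero (by rintro rfl; simp at ht)
        have hd1 : (p:ℤ) ∣ u (m*p) := by
          have hv := hLTEp m hm hd
          have := (hdvdval (m*p) 1 (Nat.mul_pos hm hp.pos)).mpr (by omega)
          simpa using this
        have hlt : t' < p * t' := by
          have := hp.one_lt
          calc t' = 1 * t' := (one_mul t').symm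
            _ < p * t' := (Nat.mul_lt_mul_right ht').mpr this
        have h2 := IH t' hlt ht' (m*p) (Nat.mul_pos hm hp.pos) hd1
        rw [show m*(p*t') = (m*p)*t' from by ring, h2, hLTEp m hm hd]
        have h3 : padicValNat p (p*t') = 1 + padicValNat p t' := by
          rw [padicValNat.mul hp.ne_zero (by omega), padicValNat.self hp.one_lt]
        omega
      · rw [hLTE1 m t hm ht hpt hd, padicValNat.eq_zero_of_not_dvd hpt]
        omega
  -- final assembly
  have hκ1 : 1 ≤ padicValInt p (u (ρ p)) := by
    have := (hdvdval (ρ p) 1 hr0).mp (by simpa using hrd)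
    omega
  set κ := padicValInt p (u (ρ p)) with hκ_def
  have hgcdk : Int.gcd ((p^k : ℕ) : ℤ) c₂ = 1 := by
    have h1 : IsCoprime ((p:ℤ)^k) c₂ := (hpZ.coprime_iff_not_dvd.mpr hpc2).pow_left
    have h2 : (((p^k : ℕ)) : ℤ) = (p:ℤ)^k := by push_cast; ring
    rw [h2]
    exact Int.isCoprime_iff_gcd_eq_one.mp h1
  obtain ⟨hk0, hkd, hkmin⟩ := hρ (p^k) (pow_pos hp.pos k) hgcdk
  have hNpos : 0 < p^(k-κ) * ρ p := Nat.mul_pos (pow_pos hp.pos _) hr0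
  -- the candidate index has valuation κ + (k - κ) ≥ k
  have hvalN : padicValInt p (u (p^(k-κ) * ρ p)) = κ + (k - κ) := by
    rw [show p^(k-κ) * ρ p = ρ p * p^(k-κ) from by ring]
    rw [hLTEfull (p^(k-κ)) (pow_pos hp.pos _) (ρ p) hr0 hrd]
    rw [padicValNat.prime_pow]
  have hdN : ((p^k : ℕ) : ℤ) ∣ u (p^(k-κ) * ρ p) := by
    have h2 : (((p^k : ℕ)) : ℤ) = (p:ℤ)^k := by push_cast; ring
    rw [h2]
    exact (hdvdval _ k hNpos).mpr (by omega)
  have h1 : ρ (p^k) ≤ p^(k-κ) * ρ p := hkmin _ hNpos hdN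
  -- conversely
  have hdn : (p:ℤ)^k ∣ u (ρ (p^k)) := by
    have h2 : (((p^k : ℕ)) : ℤ) = (p:ℤ)^k := by push_cast; ring
    rw [← h2]
    exact hkd
  have hdn1 : (p:ℤ) ∣ u (ρ (p^k)) := (dvd_pow_self (p:ℤ) (by omega : k ≠ 0)).trans hdn
  obtain ⟨t, htn⟩ := hRank (ρ (p^k)) hk0 hdn1
  have ht0 : 0 < t := by
    rcases Nat.eq_zero_or_pos t with h | h
    · rw [h, mul_zero] at htn; omega
    · exact h
  have hval_n : padicValInt p (u (ρ (p^k))) = κ + padicValNat p t := by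
    rw [htn]
    exact hLTEfull t ht0 (ρ p) hr0 hrd
  have hge : k ≤ κ + padicValNat p t := by
    rw [← hval_n]
    exact (hdvdval _ k hk0).mp hdn
  have hstep : p^(k-κ) ∣ t := by
    have h3 : k - κ ≤ padicValNat p t := by omega
    exact (pow_dvd_pow p h3).trans pow_padicValNat_dvd
  have h2 : p^(k-κ) * ρ p ≤ ρ (p^k) := by
    apply Nat.le_of_dvd hk0
    obtain ⟨e, he⟩ := hstep
    exact ⟨e, by rw [htn, he]; ring⟩
  omega
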